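/- Let G be a finite group, M = ω(G) its spectrum, and for each prime r dividing |G| let φ(r) denote the unique atomic divisor of μ(G) divisible by r. Then two distinct primes r and s dividing |G| are adjacent in the prime graph GK(G) if and only if φ(r) = φ(s) or φ(r)·φ(s) ∈ ω(G). -/
import Mathlib


/-- The spectrum of a group: the set of orders of its elements. -/
def spectrum' (G : Type*) [Group G] [Fintype G] : Set ℕ :=
  {k : ℕ | ∃ g : G, orderOf g = k}

/-- The minimal spectrum: elements of the spectrum maximal w.r.t. divisibility. -/
def muSpectrum (G : Type*) [Group G] [Fintype G] : Set ℕ :=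
  {k ∈ spectrum' G | ∀ l ∈ spectrum' G, k ∣ l → k = l}

/-- An atomic divisor of a set of positive integers: a maximal integer `d > 1`
dividing some element of the set such that every element of the set is either
a multiple of `d` or coprime to `d`. -/
def AtomicDivOfSet (M : Set ℕ) (d : ℕ) : Prop :=
  1 < d ∧ (∃ m ∈ M, d ∣ m) ∧ (∀ m ∈ M, d ∣ m ∨ Nat.Coprime d m) ∧
    ∀ e : ℕ, 1 < e → (∃ m ∈ M, e ∣ m) → (∀ m ∈ M, e ∣ m ∨ Nat.Coprime e m) →
      d ∣ e → d = e

/-- The spectrum is closed under divisors. -/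
lemma spec_dvd_closed {G : Type*} [Group G] [Fintype G] {k d : ℕ}
    (hk : k ∈ spectrum' G) (hd : d ∣ k) : d ∈ spectrum' G := by
  obtain ⟨g, rfl⟩ := hk
  have hkpos : 0 < orderOf g := orderOf_pos g
  have hdpos : 0 < d := Nat.pos_of_dvd_of_pos hd hkpos
  refine ⟨g ^ (orderOf g / d), ?_⟩
  rw [orderOf_pow]
  have h1 : orderOf g / d ∣ orderOf g := Nat.div_dvd_of_dvd hd
  rw [Nat.gcd_eq_right h1, Nat.div_div_self hd hkpos.ne']

/-- Every element of the spectrum divides some element of the minimal spectrum. -/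
lemma exists_mu_multiple {G : Type*} [Group G] [Fintype G] {k : ℕ}
    (hk : k ∈ spectrum' G) : ∃ m ∈ muSpectrum G, k ∣ m := by
  classical
  set S : Finset ℕ := (Finset.univ.image (orderOf : G → ℕ)).filter (k ∣ ·) with hS
  have hne : S.Nonempty := by
    obtain ⟨g, rfl⟩ := hk
    exact ⟨orderOf g, by simp [hS]⟩
  obtain ⟨m, hmS, hmax⟩ := S.exists_max_image id hne
  simp only [hS, Finset.mem_filter, Finset.mem_image, Finset.mem_univ, true_and] at hmS
  obtain ⟨⟨g, hg⟩, hkm⟩ := hmS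
  refine ⟨m, ⟨⟨g, hg⟩, ?_⟩, hkm⟩
  intro l hl hml
  obtain ⟨h, hh⟩ := hl
  have hlS : l ∈ S := by
    simp only [hS, Finset.mem_filter, Finset.mem_image, Finset.mem_univ, true_and]
    exact ⟨⟨h, hh⟩, hkm.trans hml⟩
  have h1 : l ≤ m := hmax l hlS
  have hlpos : 0 < l := hh ▸ orderOf_pos h
  have h2 : m ≤ l := Nat.le_of_dvd hlpos hml
  omega

/-- Two non-coprime atomic divisors are equal. -/
lemma atomic_eq_of_not_coprime {M : Set ℕ} {d e : ℕ}
    (hd : AtomicDivOfSet M d) (he : AtomicDivOfSet M e)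
    (h : ¬ Nat.Coprime d e) : d = e := by
  obtain ⟨hd1, ⟨md, hmd, hdmd⟩, hdall, hdmax⟩ := hd
  obtain ⟨he1, ⟨me, hme, heme⟩, heall, hemax⟩ := he
  set g := Nat.gcd d e with hg
  have hgpos : 0 < g := Nat.gcd_pos_of_pos_left e (by omega)
  have hg1 : 1 < g := lt_of_le_of_ne hgpos (fun he' => h he'.symm)
  have hA : ∀ m ∈ M, d ∣ m → e ∣ m := by
    intro m hm hdm
    rcases heall m hm with h' | h'
    · exact h'
    · exfalso
      have hge : g ∣ Nat.gcd e m := Nat.dvd_gcd (Nat.gcd_dvd_right d e)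
        ((Nat.gcd_dvd_left d e).trans hdm)
      rw [Nat.Coprime] at h'
      rw [h'] at hge
      have := Nat.le_of_dvd one_pos hge
      omega
  have hB : ∀ m ∈ M, e ∣ m → d ∣ m := by
    intro m hm hem
    rcases hdall m hm with h' | h'
    · exact h'
    · exfalso
      have hge : g ∣ Nat.gcd d m := Nat.dvd_gcd (Nat.gcd_dvd_left d e)
        ((Nat.gcd_dvd_right d e).trans hem)
      rw [Nat.Coprime] at h'
      rw [h'] at hge
      have := Nat.le_of_dvd one_pos hge
      omega
  set L := Nat.lcm d e with hL
  have hdL : d ∣ L := Nat.dvd_lcm_left d e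
  have heL : e ∣ L := Nat.dvd_lcm_right d e
  have hLpos : 0 < L := Nat.pos_of_ne_zero (Nat.lcm_ne_zero (by omega) (by omega))
  have hL1 : 1 < L := lt_of_lt_of_le hd1 (Nat.le_of_dvd hLpos hdL)
  have hLex : ∃ m ∈ M, L ∣ m := ⟨md, hmd, Nat.lcm_dvd hdmd (hA md hmd hdmd)⟩
  have hLall : ∀ m ∈ M, L ∣ m ∨ Nat.Coprime L m := by
    intro m hm
    rcases hdall m hm with h' | h'
    · exact Or.inl (Nat.lcm_dvd h' (hA m hm h'))
    · right
      have hem : Nat.Coprime e m := by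
        rcases heall m hm with h'' | h''
        · exfalso
          have hge : g ∣ Nat.gcd d m := Nat.dvd_gcd (Nat.gcd_dvd_left d e)
            ((Nat.gcd_dvd_right d e).trans h'')
          rw [Nat.Coprime] at h'
          rw [h'] at hge
          have := Nat.le_of_dvd one_pos hge
          omega
        · exact h''
      exact Nat.Coprime.coprime_dvd_left (Nat.lcm_dvd (Dvd.intro e rfl)
        (Dvd.intro_left d rfl)) (Nat.Coprime.mul h' hem)
  have h1 : d = L := hdmax L hL1 hLex hLall hdL
  have h2 : e = L := hemax L hL1 hLex hLall heL
  rw [h1, h2]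

theorem stmt_18 (G : Type*) [Group G] [Fintype G] (r s : ℕ)
    (hr : r.Prime) (hs : s.Prime) (hrs : r ≠ s)
    (hrd : r ∣ Fintype.card G) (hsd : s ∣ Fintype.card G)
    (vr vs : ℕ) (hvr : AtomicDivOfSet (muSpectrum G) vr)
    (hvs : AtomicDivOfSet (muSpectrum G) vs)
    (hrvr : r ∣ vr) (hsvs : s ∣ vs) :
    (∃ g : G, orderOf g = r * s) ↔ (vr = vs ∨ ∃ g : G, orderOf g = vr * vs) := by
  constructor
  · intro hrsω
    obtain ⟨m, hmμ, hrsm⟩ := exists_mu_multiple hrsω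
    have hrm : r ∣ m := (dvd_mul_right r s).trans hrsm
    have hsm : s ∣ m := (dvd_mul_left s r).trans hrsm
    have hvrm : vr ∣ m := by
      rcases hvr.2.2.1 m hmμ with h' | h'
      · exact h'
      · exfalso
        have : r ∣ 1 := h' ▸ Nat.dvd_gcd hrvr hrm
        exact Nat.Prime.one_lt hr |>.ne' (Nat.eq_one_of_dvd_one this ▸ rfl) |>.elim
    have hvsm : vs ∣ m := by
      rcases hvs.2.2.1 m hmμ with h' | h'
      · exact h'
      · exfalso
        have : s ∣ 1 := h' ▸ Nat.dvd_gcd hsvs hsm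
        exact Nat.Prime.one_lt hs |>.ne' (Nat.eq_one_of_dvd_one this ▸ rfl) |>.elim
    by_cases hco : Nat.Coprime vr vs
    · right
      have : vr * vs ∣ m := Nat.Coprime.mul_dvd_of_dvd_of_dvd hco hvrm hvsm
      exact spec_dvd_closed hmμ.1 this
    · exact Or.inl (atomic_eq_of_not_coprime hvr hvs hco)
  · intro h
    rcases h with h | h
    · obtain ⟨m, hmμ, hvrm⟩ := hvr.2.1
      have hsvr : s ∣ vr := h ▸ hsvs
      have hrsvr : r * s ∣ vr :=
        Nat.Coprime.mul_dvd_of_dvd_of_dvd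
          (Nat.coprime_primes hr hs |>.mpr hrs) hrvr hsvr
      exact spec_dvd_closed hmμ.1 (hrsvr.trans hvrm)
    · have hrsdvd : r * s ∣ vr * vs :=
        Nat.Coprime.mul_dvd_of_dvd_of_dvd
          (Nat.coprime_primes hr hs |>.mpr hrs)
          (hrvr.trans (dvd_mul_right vr vs))
          (hsvs.trans (dvd_mul_left vs vr))
      exact spec_dvd_closed h hrsdvd
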